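/- For any probability measure Π on [0,1], the signed voting signature satisfies ω_Π({1/4}) = 0 and ∫_{[0,1/4)} (1−4r)^{−1/2} d|ω_Π|(r) ≤ 1. -/

import Mathlib

open MeasureTheory
open scoped ENNReal NNReal

/-- Odd-budget majority accuracy: `P n q = ℙ(Bin(2n+1,q) ≥ n+1)`. -/
noncomputable def majP (n : ℕ) (q : ℝ) : ℝ :=
  ∑ j ∈ Finset.Icc (n+1) (2*n+1), ((2*n+1).choose j : ℝ) * q^j * (1-q)^(2*n+1-j)

/-- Population voting curve. -/
noncomputable def voteV (μ : Measure ℝ) (n : ℕ) : ℝ := ∫ q, majP n q ∂μ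

lemma aux_fin (μ : Measure ℝ) [IsFiniteMeasure μ] (g : ℝ → ℝ) (hg : ∀ q ∈ Set.Icc (0:ℝ) 1, g q ≤ 1) :
    IsFiniteMeasure ((μ.restrict (Set.Icc 0 1)).withDensity (fun q => ENNReal.ofReal (g q))) := by
  apply isFiniteMeasure_withDensity
  have h : ∫⁻ q, ENNReal.ofReal (g q) ∂(μ.restrict (Set.Icc 0 1)) ≤ ∫⁻ _, 1 ∂(μ.restrict (Set.Icc 0 1)) := by
    refine setLIntegral_mono' measurableSet_Icc fun q hq => ?_
    simpa using ENNReal.ofReal_le_one.2 (hg q hq)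
  refine ne_of_lt (lt_of_le_of_lt h ?_)
  simp [lintegral_one]

/-- Signed voting signature as a signed measure on ℝ (carried on [0,1/4]). -/
noncomputable def signature (μ : Measure ℝ) [IsFiniteMeasure μ] : SignedMeasure ℝ :=
  letI h1 := aux_fin μ (fun q => 2*q-1) (by intro q hq; simp only [Set.mem_Icc] at hq; linarith [hq.2])
  letI h2 := aux_fin μ (fun q => 1-2*q) (by intro q hq; simp only [Set.mem_Icc] at hq; linarith [hq.1])
  (((μ.restrict (Set.Icc 0 1)).withDensity (fun q => ENNReal.ofReal (2*q-1))).map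
      (fun q => q*(1-q))).toSignedMeasure
  - (((μ.restrict (Set.Icc 0 1)).withDensity (fun q => ENNReal.ofReal (1-2*q))).map
      (fun q => q*(1-q))).toSignedMeasure

/-- Integral of a real function against a signed measure, via the Jordan decomposition. -/
noncomputable def sInt {α : Type*} [MeasurableSpace α] (s : SignedMeasure α) (f : α → ℝ) : ℝ :=
  (∫ a, f a ∂s.toJordanDecomposition.posPart) - ∫ a, f a ∂s.toJordanDecomposition.negPart

/-- Limiting majority accuracy. -/
noncomputable def voteVinf (μ : Measure ℝ) : ℝ :=
  (μ (Set.Ioc (1/2 : ℝ) 1)).toReal + (1/2) * (μ {(1/2 : ℝ)}).toReal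

/-- Total-variation norm of the signed voting signature. -/
noncomputable def sigTV (μ : Measure ℝ) [IsFiniteMeasure μ] : ℝ :=
  ((signature μ).totalVariation Set.univ).toReal

/-- The signed voting signature has no atom at `1/4` and its total variation integrates
the singular kernel `(1−4r)^{−1/2}` to at most one on `[0,1/4)`. -/
lemma tv_le {α : Type*} [MeasurableSpace α] (a b : Measure α) [IsFiniteMeasure a]
    [IsFiniteMeasure b] :
    (a.toSignedMeasure - b.toSignedMeasure).totalVariation ≤ a + b := by
  obtain ⟨i, hi₁, hi₂, hi₃, hpos, hneg⟩ :=
    (a.toSignedMeasure - b.toSignedMeasure).toJordanDecomposition_spec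
  refine Measure.le_iff.2 fun E hE => ?_
  rw [SignedMeasure.totalVariation, Measure.add_apply, hpos, hneg,
    SignedMeasure.toMeasureOfZeroLE_apply _ _ _ hE,
    SignedMeasure.toMeasureOfLEZero_apply _ _ _ hE, Measure.add_apply]
  rw [← ENNReal.ofReal_eq_coe_nnreal, ← ENNReal.ofReal_eq_coe_nnreal]
  have h1 : (a.toSignedMeasure - b.toSignedMeasure) (i ∩ E)
      = (a (i ∩ E)).toReal - (b (i ∩ E)).toReal :=
    Measure.toSignedMeasure_sub_apply (hi₁.inter hE)
  have h2 : (a.toSignedMeasure - b.toSignedMeasure) (iᶜ ∩ E)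
      = (a (iᶜ ∩ E)).toReal - (b (iᶜ ∩ E)).toReal :=
    Measure.toSignedMeasure_sub_apply (hi₁.compl.inter hE)
  have ha : (a (i ∩ E)).toReal ≤ (a E).toReal :=
    ENNReal.toReal_mono (measure_ne_top _ _) (measure_mono Set.inter_subset_right)
  have hb : (b (iᶜ ∩ E)).toReal ≤ (b E).toReal :=
    ENNReal.toReal_mono (measure_ne_top _ _) (measure_mono Set.inter_subset_right)
  refine add_le_add (ENNReal.ofReal_le_of_le_toReal ?_) (ENNReal.ofReal_le_of_le_toReal ?_)
  · rw [h1]; have := ENNReal.toReal_nonneg (a := b (i ∩ E)); linarith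
  · rw [h2]; have := ENNReal.toReal_nonneg (a := a (iᶜ ∩ E)); linarith

theorem stmt6 (μ : Measure ℝ) [IsProbabilityMeasure μ] (hμ : μ (Set.Icc (0:ℝ) 1)ᶜ = 0) :
    signature μ {(1/4 : ℝ)} = 0 ∧
    ∫⁻ r in Set.Ico (0:ℝ) (1/4), ENNReal.ofReal (Real.sqrt (1 - 4*r))⁻¹
        ∂(signature μ).totalVariation ≤ 1 := by
  classical
  set I : Set ℝ := Set.Icc 0 1 with hI
  set f : ℝ → ℝ := fun q => q*(1-q) with hf
  have hfm : Measurable f := by fun_prop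
  set dP : ℝ → ℝ≥0∞ := fun q => ENNReal.ofReal (2*q-1) with hdP
  set dM : ℝ → ℝ≥0∞ := fun q => ENNReal.ofReal (1-2*q) with hdM
  have hdPm : Measurable dP := by fun_prop
  have hdMm : Measurable dM := by fun_prop
  haveI h1 := aux_fin μ (fun q => 2*q-1) (by intro q hq; simp only [Set.mem_Icc] at hq; linarith [hq.2])
  haveI h2 := aux_fin μ (fun q => 1-2*q) (by intro q hq; simp only [Set.mem_Icc] at hq; linarith [hq.1])
  set nuP : Measure ℝ := (μ.restrict I).withDensity dP with hnuP
  set nuM : Measure ℝ := (μ.restrict I).withDensity dM with hnuM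
  have hsig : signature μ = (nuP.map f).toSignedMeasure - (nuM.map f).toSignedMeasure := rfl
  have hpre : f ⁻¹' {(1/4 : ℝ)} = {(1/2 : ℝ)} := by
    ext q
    simp only [Set.mem_preimage, Set.mem_singleton_iff, hf]
    constructor
    · intro h; nlinarith [sq_nonneg (2*q-1)]
    · intro h; rw [h]; norm_num
  constructor
  · rw [hsig, Measure.toSignedMeasure_sub_apply (measurableSet_singleton _)]
    have eP : nuP.map f {(1/4:ℝ)} = 0 := by
      rw [Measure.map_apply hfm (measurableSet_singleton _), hpre, hnuP,
        withDensity_apply _ (measurableSet_singleton _), lintegral_singleton]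
      norm_num [hdP]
    have eM : nuM.map f {(1/4:ℝ)} = 0 := by
      rw [Measure.map_apply hfm (measurableSet_singleton _), hpre, hnuM,
        withDensity_apply _ (measurableSet_singleton _), lintegral_singleton]
      norm_num [hdM]
    rw [Measure.real, Measure.real, eP, eM]; simp
  · set g : ℝ → ℝ≥0∞ := fun r => ENNReal.ofReal (Real.sqrt (1 - 4*r))⁻¹ with hg
    have hgm : Measurable g := by fun_prop
    set A : Set ℝ := Set.Ico (0:ℝ) (1/4) with hA
    have hAm : MeasurableSet A := measurableSet_Ico
    have hTV : (signature μ).totalVariation ≤ nuP.map f + nuM.map f := by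
      rw [hsig]; exact tv_le _ _
    have hgfm : Measurable (fun q => g (f q)) := hgm.comp hfm
    calc ∫⁻ r in A, g r ∂(signature μ).totalVariation
        ≤ ∫⁻ r in A, g r ∂(nuP.map f + nuM.map f) :=
          lintegral_mono' (Measure.restrict_mono subset_rfl hTV) le_rfl
      _ = (∫⁻ r in A, g r ∂(nuP.map f)) + ∫⁻ r in A, g r ∂(nuM.map f) := by
          rw [Measure.restrict_add, lintegral_add_measure]
      _ = (∫⁻ q in f ⁻¹' A, g (f q) ∂nuP) + ∫⁻ q in f ⁻¹' A, g (f q) ∂nuM := by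
          rw [setLIntegral_map hAm hgm hfm, setLIntegral_map hAm hgm hfm]
      _ = (∫⁻ q in f ⁻¹' A, dP q * g (f q) ∂(μ.restrict I))
          + ∫⁻ q in f ⁻¹' A, dM q * g (f q) ∂(μ.restrict I) := by
          rw [hnuP, hnuM, restrict_withDensity (hfm hAm), restrict_withDensity (hfm hAm),
            lintegral_withDensity_eq_lintegral_mul _ hdPm hgfm,
            lintegral_withDensity_eq_lintegral_mul _ hdMm hgfm]
          rfl
      _ = ∫⁻ q in f ⁻¹' A, (dP q * g (f q) + dM q * g (f q)) ∂(μ.restrict I) :=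
          (lintegral_add_left (hdPm.mul hgfm) _).symm
      _ = ∫⁻ q in f ⁻¹' A ∩ I, (dP q * g (f q) + dM q * g (f q)) ∂μ := by
          rw [Measure.restrict_restrict (hfm hAm)]
      _ ≤ ∫⁻ _ in f ⁻¹' A ∩ I, 1 ∂μ := by
          refine setLIntegral_mono' ((hfm hAm).inter measurableSet_Icc) fun q hq => ?_
          obtain ⟨hqA, hqI⟩ := hq
          simp only [Set.mem_preimage, hA, Set.mem_Ico, hf] at hqA
          have hne : q ≠ 1/2 := by
            intro h; rw [h] at hqA; norm_num at hqA
          have habs : 0 < |2*q-1| := abs_pos.2 (fun h => hne (by linarith))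
          have hsq : 1 - 4*(q*(1-q)) = (2*q-1)^2 := by ring
          have hgval : g (f q) = ENNReal.ofReal |2*q-1|⁻¹ := by
            simp only [hg, hf, hsq, Real.sqrt_sq_eq_abs]
          have hsum : dP q + dM q = ENNReal.ofReal |2*q-1| := by
            simp only [hdP, hdM]
            rcases le_or_gt q (1/2) with h | h
            · rw [ENNReal.ofReal_eq_zero.2 (by linarith : 2*q-1 ≤ 0), zero_add,
                abs_of_nonpos (by linarith : 2*q-1 ≤ 0)]
              congr 1; ring
            · rw [ENNReal.ofReal_eq_zero.2 (by linarith : 1-2*q ≤ 0), add_zero,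
                abs_of_pos (by linarith : (0:ℝ) < 2*q-1)]
          calc dP q * g (f q) + dM q * g (f q) = (dP q + dM q) * g (f q) := by ring
            _ = ENNReal.ofReal |2*q-1| * ENNReal.ofReal |2*q-1|⁻¹ := by rw [hsum, hgval]
            _ = ENNReal.ofReal (|2*q-1| * |2*q-1|⁻¹) :=
                (ENNReal.ofReal_mul (le_of_lt habs)).symm
            _ = 1 := by rw [mul_inv_cancel₀ (ne_of_gt habs)]; simp
            _ ≤ 1 := le_rfl
      _ ≤ 1 := by
          rw [setLIntegral_one]
          exact (measure_mono (Set.subset_univ _)).trans_eq measure_univ
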